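/- Let m_q be inverted dropout with keep probability q∈(0,1] on the grid U, and let h:U→ℝ be a deterministic field satisfying 𝓔_int(h) > 0. Define the coherence score κ(h) = (Σ_{x∈U} d_x^int h(x)²)/(2·𝓔_int(h)). Then the expected relative intrinsic energy inflation satisfies 𝔼[𝓔_int(m_q ⊙ h)] / 𝓔_int(h) = 1 + ((1−q)/q)·κ(h). -/

import Mathlib

open MeasureTheory Real

noncomputable section
/-- A point of the `H × W` feature grid `U = {1,…,H} × {1,…,W}` (0-indexed model). -/
abbrev GridPt (H W : ℕ) := Fin H × Fin W

/-- Embedding of the grid into `ℤ × ℤ` with coordinates in `{1,…,H} × {1,…,W}`. -/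
def gridZ {H W : ℕ} (x : GridPt H W) : ℤ × ℤ := ((x.1 : ℤ) + 1, (x.2 : ℤ) + 1)

/-- Nearest-neighbor adjacency on `ℤ × ℤ`: `ℓ¹`-distance one. -/
def adjZ (p q : ℤ × ℤ) : Bool := |p.1 - q.1| + |p.2 - q.2| == 1

/-- The Dirichlet Laplacian matrix on the grid `U` with edge weights `c` and zero
(auxiliary Dirichlet) boundary: `(L_U φ)(x) = ∑_{y : {x,y} ∈ E} c_{xy} (φ(x) − φ̄(y))`
where `φ̄` extends `φ` by zero outside `U`. -/
def dirichletLap (H W : ℕ) (c : ℤ × ℤ → ℤ × ℤ → ℝ) :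
    Matrix (GridPt H W) (GridPt H W) ℝ := fun x y =>
  if x = y then
    ((([((1 : ℤ), (0 : ℤ)), (-1, 0), (0, 1), (0, -1)] : List (ℤ × ℤ)).map
      (fun d => c (gridZ x) (gridZ x + d))).sum)
  else if adjZ (gridZ x) (gridZ y) then -c (gridZ x) (gridZ y) else 0
/-- Intrinsic energy `𝓔_int(f) = (1/2) ∑_{{x,y} ∈ E_int} c_{xy} (f(x) − f(y))²`,
written as `1/4` times the sum over ordered adjacent pairs in `U`. -/
def Eint {H W : ℕ} (c : ℤ × ℤ → ℤ × ℤ → ℝ) (f : GridPt H W → ℝ) : ℝ :=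
  (1 / 4) * ∑ x : GridPt H W, ∑ y : GridPt H W,
    if adjZ (gridZ x) (gridZ y) then c (gridZ x) (gridZ y) * (f x - f y) ^ 2 else 0

/-- Intrinsic weighted degree `d_x^int = ∑_{y : {x,y} ∈ E_int} c_{xy}`. -/
def dInt {H W : ℕ} (c : ℤ × ℤ → ℤ × ℤ → ℝ) (x : GridPt H W) : ℝ :=
  ∑ y : GridPt H W, if adjZ (gridZ x) (gridZ y) then c (gridZ x) (gridZ y) else 0

/-- Interior (intrinsic) graph Laplacian `L_int` on `U`, with no boundary term. -/
def Lint (H W : ℕ) (c : ℤ × ℤ → ℤ × ℤ → ℝ) :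
    Matrix (GridPt H W) (GridPt H W) ℝ := fun x y =>
  if x = y then dInt c x
  else if adjZ (gridZ x) (gridZ y) then -c (gridZ x) (gridZ y) else 0
/-- Inverted-dropout mask `m_q(x) = b(x)/q` built from a Boolean keep pattern `ω`. -/
def maskD {ι : Type*} (q : ℝ) (ω : ι → Bool) (x : ι) : ℝ :=
  (if ω x then (1 : ℝ) else 0) / q

/-- The law of i.i.d. `Bernoulli(q)` keep variables indexed by `ι`
(the canonical product measure, i.e. i.i.d. coordinates). -/
def bernoulliPi (ι : Type*) [Fintype ι] (q : ℝ) (hq : q ≤ 1) :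
    MeasureTheory.Measure (ι → Bool) :=
  MeasureTheory.Measure.pi fun _ =>
    (PMF.bernoulli (Real.toNNReal q) (Real.toNNReal_le_one.mpr hq)).toMeasure


def bern (q : ℝ) (hq : q ≤ 1) : Measure Bool :=
  (PMF.bernoulli (Real.toNNReal q) (Real.toNNReal_le_one.mpr hq)).toMeasure
instance (q : ℝ) (hq : q ≤ 1) : IsProbabilityMeasure (bern q hq) :=
  PMF.toMeasure.isProbabilityMeasure _
instance (ι : Type*) [Fintype ι] (q : ℝ) (hq : q ≤ 1) :
    IsProbabilityMeasure (bernoulliPi ι q hq) := by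
  unfold bernoulliPi; infer_instance

lemma bern_integral {q : ℝ} (hq0 : 0 < q) (hq1 : q ≤ 1) (g : Bool → ℝ) :
    ∫ b, g b ∂ bern q hq1 = q * g true + (1 - q) * g false := by
  rw [integral_fintype (Integrable.of_finite)]
  have ht : (bern q hq1).real {true} = q := by
    rw [measureReal_def, bern, PMF.toMeasure_apply_singleton _ _ (measurableSet_singleton _),
      PMF.bernoulli_apply]
    simp [Real.coe_toNNReal _ hq0.le]
  have hf : (bern q hq1).real {false} = 1 - q := by
    rw [measureReal_def, bern, PMF.toMeasure_apply_singleton _ _ (measurableSet_singleton _),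
      PMF.bernoulli_apply]
    simp only [cond]
    rw [ENNReal.coe_toReal, NNReal.coe_sub (Real.toNNReal_le_one.mpr hq1)]
    simp [Real.coe_toNNReal _ hq0.le]
  rw [Fintype.sum_bool, ht, hf]
  simp only [smul_eq_mul]

lemma bern_one {q : ℝ} (hq0 : 0 < q) (hq1 : q ≤ 1) :
    ∫ (_ : Bool), (1 : ℝ) ∂ bern q hq1 = 1 := by
  rw [bern_integral hq0 hq1]; ring

lemma single_integral {ι : Type*} [Fintype ι] [DecidableEq ι] {q : ℝ} (hq0 : 0 < q)
    (hq1 : q ≤ 1) (x : ι) (g : Bool → ℝ) :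
    ∫ ω, g (ω x) ∂ bernoulliPi ι q hq1 = ∫ b, g b ∂ bern q hq1 := by
  letI : MeasureSpace Bool := ⟨bern q hq1⟩
  haveI : IsProbabilityMeasure (volume : Measure Bool) := PMF.toMeasure.isProbabilityMeasure _
  have hvol : bernoulliPi ι q hq1 = (volume : Measure (ι → Bool)) := rfl
  rw [hvol]
  set f : ι → Bool → ℝ := fun i b => if i = x then g b else 1 with hfdef
  have key : ∀ ω : ι → Bool, g (ω x) = ∏ i, f i (ω i) := by
    intro ω
    rw [Finset.prod_eq_single x (fun i _ hi => by simp [hfdef, hi]) (by simp)]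
    simp [hfdef]
  calc ∫ ω : ι → Bool, g (ω x) = ∫ ω : ι → Bool, ∏ i, f i (ω i) := by
        simp_rw [← key]
    _ = ∏ i, ∫ b, f i b := integral_fintype_prod_eq_prod (E := fun _ => Bool) f
    _ = ∫ b, g b := by
        rw [Finset.prod_eq_single x (fun i _ hi => ?_) (by simp)]
        · simp [hfdef]
        · simp only [hfdef, hi, if_false]
          exact bern_one hq0 hq1

lemma pair_integral {ι : Type*} [Fintype ι] [DecidableEq ι] {q : ℝ} (hq0 : 0 < q)
    (hq1 : q ≤ 1) {x y : ι} (hxy : x ≠ y) (g₁ g₂ : Bool → ℝ) :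
    ∫ ω, g₁ (ω x) * g₂ (ω y) ∂ bernoulliPi ι q hq1
      = (∫ b, g₁ b ∂ bern q hq1) * ∫ b, g₂ b ∂ bern q hq1 := by
  letI : MeasureSpace Bool := ⟨bern q hq1⟩
  haveI : IsProbabilityMeasure (volume : Measure Bool) := PMF.toMeasure.isProbabilityMeasure _
  have hvol : bernoulliPi ι q hq1 = (volume : Measure (ι → Bool)) := rfl
  rw [hvol]
  set f : ι → Bool → ℝ := fun i b => if i = x then g₁ b else if i = y then g₂ b else 1 with hfdef
  have key : ∀ ω : ι → Bool, g₁ (ω x) * g₂ (ω y) = ∏ i, f i (ω i) := by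
    intro ω
    rw [← Finset.prod_subset (Finset.subset_univ ({x, y} : Finset ι))
      (fun i _ hi => ?_), Finset.prod_pair hxy]
    · simp [hfdef, hxy, Ne.symm hxy]
    · simp only [Finset.mem_insert, Finset.mem_singleton, not_or] at hi
      simp [hfdef, hi.1, hi.2]
  calc ∫ ω : ι → Bool, g₁ (ω x) * g₂ (ω y) = ∫ ω : ι → Bool, ∏ i, f i (ω i) := by
        simp_rw [← key]
    _ = ∏ i, ∫ b, f i b := integral_fintype_prod_eq_prod (E := fun _ => Bool) f
    _ = (∫ b, g₁ b) * ∫ b, g₂ b := by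
        rw [← Finset.prod_subset (Finset.subset_univ ({x, y} : Finset ι))
          (fun i _ hi => ?_), Finset.prod_pair hxy]
        · simp [hfdef, hxy, Ne.symm hxy]
        · simp only [Finset.mem_insert, Finset.mem_singleton, not_or] at hi
          simp only [hfdef, hi.1, hi.2, if_false]
          exact bern_one hq0 hq1

lemma adjZ_symm (p q : ℤ × ℤ) : adjZ p q = adjZ q p := by
  unfold adjZ
  rw [abs_sub_comm p.1, abs_sub_comm p.2]

lemma adjZ_ne {H W : ℕ} {x y : GridPt H W} (hadj : adjZ (gridZ x) (gridZ y)) : x ≠ y := by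
  intro h; subst h; simp [adjZ] at hadj


/-- Coherence amplification factor for inverted dropout: if
`𝓔_int(h) > 0` and `κ(h) = (∑_x d_x^int h(x)²)/(2 𝓔_int(h))`, then
`𝔼[𝓔_int(m_q ⊙ h)] / 𝓔_int(h) = 1 + ((1−q)/q) κ(h)`. -/
theorem dropout_coherence_amplification {H W : ℕ}
    (c : ℤ × ℤ → ℤ × ℤ → ℝ)
    (hsym : ∀ p q : ℤ × ℤ, c p q = c q p)
    (hpos : ∀ p q : ℤ × ℤ, adjZ p q → 0 < c p q)
    (q : ℝ) (hq0 : 0 < q) (hq1 : q ≤ 1)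
    (h : GridPt H W → ℝ) (hE : 0 < Eint c h) :
    (∫ ω, Eint c (fun x => maskD q ω x * h x) ∂(bernoulliPi (GridPt H W) q hq1)) /
        Eint c h =
      1 + ((1 - q) / q) *
        ((∑ x : GridPt H W, dInt c x * (h x) ^ 2) / (2 * Eint c h)) := by

  classical
  set μ := bernoulliPi (GridPt H W) q hq1 with hμ
  have hq' : q ≠ 0 := ne_of_gt hq0
  set g1 : Bool → ℝ := fun b => (if b then (1:ℝ) else 0) / q with hg1def
  set g2 : Bool → ℝ := fun b => ((if b then (1:ℝ) else 0) / q) ^ 2 with hg2def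
  have hg1 : ∫ b, g1 b ∂ bern q hq1 = 1 := by
    rw [bern_integral hq0 hq1]; simp [hg1def]; field_simp
  have hg2 : ∫ b, g2 b ∂ bern q hq1 = 1 / q := by
    rw [bern_integral hq0 hq1]; simp [hg2def]; field_simp
  -- per-pair integral for adjacent pairs
  have key : ∀ x y : GridPt H W, adjZ (gridZ x) (gridZ y) →
      ∫ ω, c (gridZ x) (gridZ y) * (maskD q ω x * h x - maskD q ω y * h y) ^ 2 ∂μ
        = c (gridZ x) (gridZ y) * ((h x - h y) ^ 2
            + ((1 - q) / q) * ((h x) ^ 2 + (h y) ^ 2)) := by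
    intro x y hadj
    have hxy : x ≠ y := adjZ_ne hadj
    have hexp : ∀ ω : GridPt H W → Bool,
        c (gridZ x) (gridZ y) * (maskD q ω x * h x - maskD q ω y * h y) ^ 2
          = (c (gridZ x) (gridZ y) * (h x) ^ 2) * g2 (ω x)
            + ((c (gridZ x) (gridZ y) * (h y) ^ 2) * g2 (ω y)
            + (-(2 * c (gridZ x) (gridZ y) * h x * h y)) * (g1 (ω x) * g1 (ω y))) := by
      intro ω
      simp only [maskD, hg1def, hg2def]
      ring
    simp_rw [hexp]
    rw [integral_add (Integrable.of_finite) (Integrable.of_finite),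
      integral_add (Integrable.of_finite) (Integrable.of_finite),
      integral_const_mul, integral_const_mul, integral_const_mul,
      single_integral hq0 hq1 x g2, single_integral hq0 hq1 y g2,
      pair_integral hq0 hq1 hxy g1 g1, hg1, hg2]
    field_simp
    ring
  -- total expected energy
  have hTot : (∫ ω, Eint c (fun x => maskD q ω x * h x) ∂μ)
      = Eint c h + ((1 - q) / q) * ((∑ x : GridPt H W, dInt c x * (h x) ^ 2) / 2) := by
    have step1 : (∫ ω, Eint c (fun x => maskD q ω x * h x) ∂μ)
        = (1/4) * ∑ p : GridPt H W × GridPt H W,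
            ∫ ω, (if adjZ (gridZ p.1) (gridZ p.2) then
              c (gridZ p.1) (gridZ p.2)
                * (maskD q ω p.1 * h p.1 - maskD q ω p.2 * h p.2) ^ 2 else 0) ∂μ := by
      simp only [Eint]
      rw [integral_const_mul]
      congr 1
      rw [← integral_finset_sum _ (fun i _ => Integrable.of_finite)]
      congr 1
      funext ω
      exact (Fintype.sum_prod_type (fun p : GridPt H W × GridPt H W =>
        if adjZ (gridZ p.1) (gridZ p.2) then
          c (gridZ p.1) (gridZ p.2)
            * (maskD q ω p.1 * h p.1 - maskD q ω p.2 * h p.2) ^ 2 else 0)).symm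
    have per : ∀ p : GridPt H W × GridPt H W,
        (∫ ω, (if adjZ (gridZ p.1) (gridZ p.2) then
            c (gridZ p.1) (gridZ p.2)
              * (maskD q ω p.1 * h p.1 - maskD q ω p.2 * h p.2) ^ 2 else 0) ∂μ)
          = (if adjZ (gridZ p.1) (gridZ p.2) then
              c (gridZ p.1) (gridZ p.2) * (h p.1 - h p.2) ^ 2 else 0)
            + (((1 - q) / q) * ((if adjZ (gridZ p.1) (gridZ p.2) then
                c (gridZ p.1) (gridZ p.2) else 0) * (h p.1) ^ 2)
            + ((1 - q) / q) * ((if adjZ (gridZ p.1) (gridZ p.2) then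
                c (gridZ p.1) (gridZ p.2) else 0) * (h p.2) ^ 2)) := by
      intro p
      by_cases hadj : adjZ (gridZ p.1) (gridZ p.2)
      · simp only [hadj, if_true]
        rw [key p.1 p.2 hadj]
        ring
      · simp [hadj]
    rw [step1]
    rw [Finset.sum_congr rfl (fun p _ => per p)]
    rw [Finset.sum_add_distrib, Finset.sum_add_distrib, ← Finset.mul_sum, ← Finset.mul_sum]
    have hS1 : ∑ p : GridPt H W × GridPt H W,
        (if adjZ (gridZ p.1) (gridZ p.2) then
          c (gridZ p.1) (gridZ p.2) * (h p.1 - h p.2) ^ 2 else 0)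
        = 4 * Eint c h := by
      rw [Eint, Fintype.sum_prod_type]
      ring
    have hS2 : ∑ p : GridPt H W × GridPt H W,
        (if adjZ (gridZ p.1) (gridZ p.2) then c (gridZ p.1) (gridZ p.2) else 0) * (h p.1) ^ 2
        = ∑ x : GridPt H W, dInt c x * (h x) ^ 2 := by
      rw [Fintype.sum_prod_type]
      refine Finset.sum_congr rfl fun x _ => ?_
      dsimp only
      rw [dInt, ← Finset.sum_mul]
    have hS3 : ∑ p : GridPt H W × GridPt H W,
        (if adjZ (gridZ p.1) (gridZ p.2) then c (gridZ p.1) (gridZ p.2) else 0) * (h p.2) ^ 2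
        = ∑ x : GridPt H W, dInt c x * (h x) ^ 2 := by
      rw [Fintype.sum_prod_type, Finset.sum_comm]
      refine Finset.sum_congr rfl fun y _ => ?_
      dsimp only
      rw [dInt, ← Finset.sum_mul]
      congr 1
      refine Finset.sum_congr rfl fun x _ => ?_
      rw [adjZ_symm, hsym]
    rw [hS1, hS2, hS3]
    ring
  rw [hTot]
  have hE' : Eint c h ≠ 0 := ne_of_gt hE
  field_simp


end
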